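/- Let G be a marked Gröbner basis of I with respect to < such that ω ∈ ℚ^n_{≥0} satisfies: for each g ∈ G with marked leading exponent α, ⟨α,ω⟩ ≥ ⟨β,ω⟩ for all β ∈ supp(g) (i.e. ω lies in the closed Gröbner cone of <). Then in_ω(G) = {in_ω(g) : g ∈ G} is a Gröbner basis of in_ω(I) with respect to <, and in_<(in_ω(g)) = in_<(g) for each g ∈ G. -/

import Mathlib

open MvPolynomial

/-- A term ordering on the monomials (exponent vectors) of `k[x_1, …, x_n]`:
a strict total well-ordering compatible with addition of exponents. -/
structure TermOrder (n : ℕ) where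
  lt : (Fin n →₀ ℕ) → (Fin n →₀ ℕ) → Prop
  irrefl : ∀ a, ¬ lt a a
  trans : ∀ a b c, lt a b → lt b c → lt a c
  trichotomous : ∀ a b, lt a b ∨ a = b ∨ lt b a
  wf : WellFounded lt
  add_right : ∀ a b c, lt a b → lt (a + c) (b + c)

variable {n : ℕ}

/-- `α` is the exponent vector of the `t`-leading term of `f`. -/
def TermOrder.IsLeadExp {k : Type*} [CommSemiring k] (t : TermOrder n)
    (f : MvPolynomial (Fin n) k) (α : Fin n →₀ ℕ) : Prop :=
  α ∈ f.support ∧ ∀ β ∈ f.support, β ≠ α → t.lt β α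

open Classical in
/-- The exponent vector of the `t`-leading term of `f` (junk value `0` if none exists). -/
noncomputable def TermOrder.leadExp {k : Type*} [CommSemiring k] (t : TermOrder n)
    (f : MvPolynomial (Fin n) k) : Fin n →₀ ℕ :=
  if h : ∃ α, t.IsLeadExp f α then h.choose else 0

/-- The leading term `in_t(f)` of `f` with respect to the term ordering `t`. -/
noncomputable def TermOrder.leadTerm {k : Type*} [CommSemiring k] (t : TermOrder n)
    (f : MvPolynomial (Fin n) k) : MvPolynomial (Fin n) k :=
  monomial (t.leadExp f) (coeff (t.leadExp f) f)

/-- The initial ideal `in_t(I)` of `I` with respect to the term ordering `t`. -/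
noncomputable def initialIdealT {k : Type*} [CommSemiring k] (t : TermOrder n)
    (I : Ideal (MvPolynomial (Fin n) k)) : Ideal (MvPolynomial (Fin n) k) :=
  Ideal.span { p | ∃ f ∈ I, f ≠ 0 ∧ p = t.leadTerm f }

/-- The `ω`-weight `⟨ω, α⟩` of an exponent vector `α`. -/
noncomputable def wt (ω : Fin n → ℝ) (α : Fin n →₀ ℕ) : ℝ :=
  ∑ i, ω i * (α i : ℝ)

/-- The initial form `in_ω(f)`: the sum of the terms of `f` of maximal `ω`-weight. -/
noncomputable def initialForm {k : Type*} [CommSemiring k] (ω : Fin n → ℝ)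
    (f : MvPolynomial (Fin n) k) : MvPolynomial (Fin n) k :=
  ∑ α ∈ f.support.filter (fun α => ∀ β ∈ f.support, wt ω β ≤ wt ω α),
    monomial α (coeff α f)

/-- The generalized initial ideal `in_ω(I)` of `I` with respect to the weight vector `ω`. -/
noncomputable def initialIdealW {k : Type*} [CommSemiring k] (ω : Fin n → ℝ)
    (I : Ideal (MvPolynomial (Fin n) k)) : Ideal (MvPolynomial (Fin n) k) :=
  Ideal.span { p | ∃ f ∈ I, f ≠ 0 ∧ p = initialForm ω f }

/-- The refinement `<_ω` of the weight vector `ω` by the term ordering `t`: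
compare first by `ω`-weight, break ties with `t`. -/
def refineLt (ω : Fin n → ℝ) (t : TermOrder n) (α β : Fin n →₀ ℕ) : Prop :=
  wt ω α < wt ω β ∨ (wt ω α = wt ω β ∧ t.lt α β)

/-- `G` is a Gröbner basis of `I` w.r.t. `t`: `G ⊆ I` and the leading terms of the
elements of `G` generate the initial ideal `in_t(I)`. -/
def IsGroebnerBasis {k : Type*} [CommSemiring k] (t : TermOrder n)
    (I : Ideal (MvPolynomial (Fin n) k)) (G : Finset (MvPolynomial (Fin n) k)) : Prop :=
  (∀ g ∈ G, g ∈ I) ∧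
    Ideal.span ((fun g => t.leadTerm g) '' (G : Set (MvPolynomial (Fin n) k)))
      = initialIdealT t I

open Classical in
/-- `G` is the reduced (marked) Gröbner basis of `I` w.r.t. `t`:
a Gröbner basis that is minimal, monic and reduced. -/
def IsReducedGB {k : Type*} [CommSemiring k] (t : TermOrder n)
    (I : Ideal (MvPolynomial (Fin n) k)) (G : Finset (MvPolynomial (Fin n) k)) : Prop :=
  IsGroebnerBasis t I G ∧
  (∀ g ∈ G, coeff (t.leadExp g) g = 1) ∧
  (∀ g ∈ G, ∀ g' ∈ G, g ≠ g' → ∀ α ∈ g.support, ¬ t.leadExp g' ≤ α) ∧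
  (∀ g ∈ G, ¬ IsGroebnerBasis t I (G.erase g))


-- ### auxiliary lemmas

-- ### basic term order facts

theorem TermOrder.exists_isLeadExp {k : Type*} [CommSemiring k] (t : TermOrder n)
    {f : MvPolynomial (Fin n) k} (hf : f ≠ 0) : ∃ α, t.IsLeadExp f α := by
  classical
  have hne : f.support.Nonempty := Finset.nonempty_iff_ne_empty.2 (mt support_eq_empty.1 hf)
  -- find a maximal element of a nonempty finset w.r.t. t
  suffices H : ∀ s : Finset (Fin n →₀ ℕ), s.Nonempty → ∃ α ∈ s, ∀ β ∈ s, β ≠ α → t.lt β α by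
    obtain ⟨α, hα, hmax⟩ := H f.support hne
    exact ⟨α, hα, hmax⟩
  intro s
  induction s using Finset.induction_on with
  | empty => intro h; exact absurd rfl h.ne_empty
  | @insert a s ha ih =>
    intro _
    rcases s.eq_empty_or_nonempty with rfl | hs
    · exact ⟨a, by simp, by intro β hβ hne'; simp at hβ; exact absurd hβ hne'⟩
    · obtain ⟨m, hm, hmax⟩ := ih hs
      rcases t.trichotomous a m with h | h | h
      · refine ⟨m, Finset.mem_insert_of_mem hm, ?_⟩
        intro β hβ hβne
        rcases Finset.mem_insert.1 hβ with rfl | hβs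
        · exact h
        · exact hmax β hβs hβne
      · exact absurd (h ▸ hm) ha
      · refine ⟨a, Finset.mem_insert_self a s, ?_⟩
        intro β hβ hβne
        rcases Finset.mem_insert.1 hβ with rfl | hβs
        · exact absurd rfl hβne
        · rcases eq_or_ne β m with rfl | hβm
          · exact h
          · exact t.trans β m a (hmax β hβs hβm) h

theorem TermOrder.isLeadExp_unique {k : Type*} [CommSemiring k] (t : TermOrder n)
    {f : MvPolynomial (Fin n) k} {α β : Fin n →₀ ℕ}
    (h1 : t.IsLeadExp f α) (h2 : t.IsLeadExp f β) : α = β := by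
  by_contra hne
  exact t.irrefl α (t.trans α β α (h2.2 α h1.1 hne) (h1.2 β h2.1 (Ne.symm hne)))

theorem TermOrder.leadExp_eq {k : Type*} [CommSemiring k] (t : TermOrder n)
    {f : MvPolynomial (Fin n) k} {α : Fin n →₀ ℕ} (h : t.IsLeadExp f α) :
    t.leadExp f = α := by
  classical
  have hex : ∃ α, t.IsLeadExp f α := ⟨α, h⟩
  rw [TermOrder.leadExp, dif_pos hex]
  exact t.isLeadExp_unique hex.choose_spec h

theorem TermOrder.isLeadExp_leadExp {k : Type*} [CommSemiring k] (t : TermOrder n)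
    {f : MvPolynomial (Fin n) k} (hf : f ≠ 0) : t.IsLeadExp f (t.leadExp f) := by
  obtain ⟨α, hα⟩ := t.exists_isLeadExp hf
  rw [t.leadExp_eq hα]; exact hα

theorem TermOrder.leadExp_mem_support {k : Type*} [CommSemiring k] (t : TermOrder n)
    {f : MvPolynomial (Fin n) k} (hf : f ≠ 0) : t.leadExp f ∈ f.support :=
  (t.isLeadExp_leadExp hf).1

theorem TermOrder.coeff_leadExp_ne_zero {k : Type*} [CommSemiring k] (t : TermOrder n)
    {f : MvPolynomial (Fin n) k} (hf : f ≠ 0) : coeff (t.leadExp f) f ≠ 0 :=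
  mem_support_iff.1 (t.leadExp_mem_support hf)

-- ### wt

theorem wt_add (ω : Fin n → ℝ) (α β : Fin n →₀ ℕ) : wt ω (α + β) = wt ω α + wt ω β := by
  unfold wt
  rw [← Finset.sum_add_distrib]
  refine Finset.sum_congr rfl fun i _ => ?_
  have : (α + β) i = α i + β i := rfl
  rw [this]
  push_cast
  ring

-- ### initialForm coeff/support

open Classical in
theorem coeff_initialForm {k : Type*} [CommSemiring k] (ω : Fin n → ℝ)
    (f : MvPolynomial (Fin n) k) (β : Fin n →₀ ℕ) :
    coeff β (initialForm ω f) =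
      if (∀ γ ∈ f.support, wt ω γ ≤ wt ω β) then coeff β f else 0 := by
  classical
  unfold initialForm
  rw [coeff_sum]
  simp_rw [coeff_monomial]
  rw [Finset.sum_ite_eq' _ β (fun α => coeff α f)]
  simp only [Finset.mem_filter]
  by_cases hb : β ∈ f.support
  · by_cases hmax : ∀ γ ∈ f.support, wt ω γ ≤ wt ω β
    · rw [if_pos ⟨hb, hmax⟩, if_pos hmax]
    · rw [if_neg (fun h => hmax h.2), if_neg hmax]
  · rw [if_neg (fun h => hb h.1)]
    by_cases hmax : ∀ γ ∈ f.support, wt ω γ ≤ wt ω β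
    · rw [if_pos hmax, (mem_support_iff.not_left).1 hb]
    · rw [if_neg hmax]

theorem support_initialForm_subset {k : Type*} [CommSemiring k] (ω : Fin n → ℝ)
    (f : MvPolynomial (Fin n) k) : (initialForm ω f).support ⊆ f.support := by
  intro β hβ
  rw [mem_support_iff] at hβ ⊢
  rw [coeff_initialForm] at hβ
  intro h
  apply hβ
  split <;> simp [h]

theorem mem_support_initialForm {k : Type*} [CommSemiring k] {ω : Fin n → ℝ}
    {f : MvPolynomial (Fin n) k} {β : Fin n →₀ ℕ} :
    β ∈ (initialForm ω f).support ↔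
      β ∈ f.support ∧ ∀ γ ∈ f.support, wt ω γ ≤ wt ω β := by
  classical
  rw [mem_support_iff, coeff_initialForm]
  constructor
  · intro h
    by_cases hmax : ∀ γ ∈ f.support, wt ω γ ≤ wt ω β
    · rw [if_pos hmax] at h; exact ⟨mem_support_iff.2 h, hmax⟩
    · rw [if_neg hmax] at h; exact absurd rfl h
  · rintro ⟨h1, h2⟩
    rw [if_pos h2]; exact mem_support_iff.1 h1

theorem coeff_initialForm_of_mem {k : Type*} [CommSemiring k] {ω : Fin n → ℝ}
    {f : MvPolynomial (Fin n) k} {β : Fin n →₀ ℕ}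
    (h : ∀ γ ∈ f.support, wt ω γ ≤ wt ω β) :
    coeff β (initialForm ω f) = coeff β f := by
  rw [coeff_initialForm, if_pos h]

-- ### graded pieces
noncomputable def piece {k : Type*} [CommSemiring k] (ω : Fin n → ℝ) (d : ℝ)
    (f : MvPolynomial (Fin n) k) : MvPolynomial (Fin n) k :=
  ∑ α ∈ f.support.filter (fun α => wt ω α = d), monomial α (coeff α f)

open Classical in
theorem coeff_piece {k : Type*} [CommSemiring k] (ω : Fin n → ℝ) (d : ℝ)
    (f : MvPolynomial (Fin n) k) (β : Fin n →₀ ℕ) :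
    coeff β (piece ω d f) = if wt ω β = d then coeff β f else 0 := by
  classical
  unfold piece
  rw [coeff_sum]
  simp_rw [coeff_monomial]
  rw [Finset.sum_ite_eq' _ β (fun α => coeff α f)]
  simp only [Finset.mem_filter]
  by_cases hd : wt ω β = d
  · by_cases hb : β ∈ f.support
    · rw [if_pos ⟨hb, hd⟩, if_pos hd]
    · rw [if_neg (fun h => hb h.1), if_pos hd, (mem_support_iff.not_left).1 hb]
  · rw [if_neg (fun h => hd h.2), if_neg hd]

theorem support_piece_subset {k : Type*} [CommSemiring k] (ω : Fin n → ℝ) (d : ℝ)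
    (f : MvPolynomial (Fin n) k) : (piece ω d f).support ⊆ f.support := by
  intro β hβ
  rw [mem_support_iff] at hβ ⊢
  rw [coeff_piece] at hβ
  intro h; apply hβ; split <;> simp [h]

theorem wt_of_mem_support_piece {k : Type*} [CommSemiring k] {ω : Fin n → ℝ} {d : ℝ}
    {f : MvPolynomial (Fin n) k} {β : Fin n →₀ ℕ} (hβ : β ∈ (piece ω d f).support) :
    wt ω β = d := by
  rw [mem_support_iff, coeff_piece] at hβ
  by_contra h
  rw [if_neg h] at hβ
  exact hβ rfl

theorem piece_add {k : Type*} [CommSemiring k] (ω : Fin n → ℝ) (d : ℝ)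
    (f g : MvPolynomial (Fin n) k) :
    piece ω d (f + g) = piece ω d f + piece ω d g := by
  classical
  ext β
  rw [coeff_add, coeff_piece, coeff_piece, coeff_piece, coeff_add]
  split <;> simp

/-- piece of a product with a homogeneous factor -/
theorem piece_mul_homog {k : Type*} [CommSemiring k] (ω : Fin n → ℝ) (d e : ℝ)
    (p q : MvPolynomial (Fin n) k) (hq : ∀ γ ∈ q.support, wt ω γ = e) :
    piece ω d (p * q) = piece ω (d - e) p * q := by
  classical
  ext α
  rw [coeff_piece, coeff_mul, coeff_mul]
  by_cases hd : wt ω α = d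
  · rw [if_pos hd]
    refine Finset.sum_congr rfl fun x hx => ?_
    rw [Finset.HasAntidiagonal.mem_antidiagonal] at hx
    rw [coeff_piece]
    by_cases hq0 : coeff x.2 q = 0
    · rw [hq0, mul_zero, mul_zero]
    · have hwq : wt ω x.2 = e := hq x.2 (mem_support_iff.2 hq0) -- wrong direction? fix below
      have : wt ω x.1 = d - e := by
        have := wt_add ω x.1 x.2
        rw [hx] at this
        rw [hwq] at this
        linarith [this, hd]
      rw [if_pos this]
  · rw [if_neg hd]
    symm
    refine Finset.sum_eq_zero fun x hx => ?_
    rw [Finset.HasAntidiagonal.mem_antidiagonal] at hx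
    rw [coeff_piece]
    by_cases hq0 : coeff x.2 q = 0
    · rw [hq0, mul_zero]
    · have hwq : wt ω x.2 = e := hq x.2 (mem_support_iff.2 hq0)
      by_cases hp1 : wt ω x.1 = d - e
      · exfalso
        apply hd
        have := wt_add ω x.1 x.2
        rw [hx, hwq, hp1] at this
        linarith
      · rw [if_neg hp1, zero_mul]

theorem piece_eq_zero_of_gt {k : Type*} [CommSemiring k] {ω : Fin n → ℝ} {d : ℝ}
    {f : MvPolynomial (Fin n) k} (h : ∀ β ∈ f.support, wt ω β ≤ d) {d' : ℝ}
    (hd' : d < d') : piece ω d' f = 0 := by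
  ext β
  rw [coeff_piece, coeff_zero]
  split
  · next heq =>
    by_contra hc
    have := h β (mem_support_iff.2 hc)
    rw [heq] at this
    linarith
  · rfl

/-- if all weights of f are ≤ d, then the initial form of f is its piece at d,
provided that piece is nonzero -/
theorem initialForm_eq_piece {k : Type*} [CommSemiring k] {ω : Fin n → ℝ} {d : ℝ}
    {f : MvPolynomial (Fin n) k} (hle : ∀ β ∈ f.support, wt ω β ≤ d)
    (hne : piece ω d f ≠ 0) : initialForm ω f = piece ω d f := by
  classical
  obtain ⟨α₀, hα₀⟩ := Finset.nonempty_iff_ne_empty.2 (mt support_eq_empty.1 hne)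
  have hα₀w : wt ω α₀ = d := wt_of_mem_support_piece hα₀
  have hα₀f : α₀ ∈ f.support := support_piece_subset ω d f hα₀
  ext β
  rw [coeff_initialForm, coeff_piece]
  by_cases hβf : β ∈ f.support
  · have hiff : (∀ γ ∈ f.support, wt ω γ ≤ wt ω β) ↔ wt ω β = d := by
      constructor
      · intro hmax
        exact le_antisymm (hle β hβf) (hα₀w ▸ hmax α₀ hα₀f)
      · intro h γ hγ
        rw [h]; exact hle γ hγ
    by_cases hd : wt ω β = d
    · rw [if_pos hd, if_pos (hiff.2 hd)]
    · rw [if_neg hd, if_neg (fun h => hd (hiff.1 h))]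
  · have h0 : coeff β f = 0 := (mem_support_iff.not_left).1 hβf
    rw [h0]
    simp

-- ### the refined order

theorem wt_eq_cast (ω : Fin n → ℚ) (α : Fin n →₀ ℕ) :
    wt (fun i => (ω i : ℝ)) α = ((∑ i, ω i * (α i : ℚ) : ℚ) : ℝ) := by
  unfold wt
  push_cast
  rfl

noncomputable def wtNat (ω : Fin n → ℚ) (α : Fin n →₀ ℕ) : ℕ :=
  ∑ i, ((ω i).num * ((∏ j, (ω j).den) / (ω i).den : ℕ)).toNat * α i

theorem wtNat_cast (ω : Fin n → ℚ) (hω : ∀ i, 0 ≤ ω i) (α : Fin n →₀ ℕ) :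
    ((wtNat ω α : ℚ)) = (∑ i, ω i * (α i : ℚ)) * (∏ j, (ω j).den : ℕ) := by
  unfold wtNat
  rw [Nat.cast_sum, Finset.sum_mul]
  refine Finset.sum_congr rfl fun i _ => ?_
  have hdvd : (ω i).den ∣ ∏ j, (ω j).den := Finset.dvd_prod_of_mem _ (Finset.mem_univ i)
  have hden : ((ω i).den : ℚ) ≠ 0 := by exact_mod_cast (ω i).den_nz
  have h0 : (0:ℤ) ≤ (ω i).num * ((∏ j, (ω j).den) / (ω i).den : ℕ) := by
    have h1 : 0 ≤ (ω i).num := Rat.num_nonneg.2 (hω i)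
    positivity
  rw [Nat.cast_mul]
  rw [show ((((ω i).num * ((∏ j, (ω j).den) / (ω i).den : ℕ)).toNat : ℕ) : ℚ)
      = ((((ω i).num * ((∏ j, (ω j).den) / (ω i).den : ℕ) : ℤ)) : ℚ) from by
    rw [← Int.cast_natCast, Int.toNat_of_nonneg h0]]
  have hnum' : ((ω i).num : ℚ) = ω i * (ω i).den := (Rat.mul_den_eq_num (ω i)).symm
  rw [Int.cast_mul, Int.cast_natCast, Nat.cast_div hdvd hden, hnum']
  field_simp

theorem wt_lt_iff (ω : Fin n → ℚ) (hω : ∀ i, 0 ≤ ω i) (α β : Fin n →₀ ℕ) :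
    wt (fun i => (ω i : ℝ)) α < wt (fun i => (ω i : ℝ)) β ↔ wtNat ω α < wtNat ω β := by
  rw [wt_eq_cast, wt_eq_cast, Rat.cast_lt]
  rw [← Nat.cast_lt (α := ℚ), wtNat_cast ω hω, wtNat_cast ω hω]
  have hD : (0:ℚ) < ((∏ j, (ω j).den : ℕ) : ℚ) := by
    have : 0 < ∏ j, (ω j).den := Finset.prod_pos fun j _ => (ω j).pos
    exact_mod_cast this
  exact (mul_lt_mul_iff_left₀ hD).symm

theorem wt_eq_iff (ω : Fin n → ℚ) (hω : ∀ i, 0 ≤ ω i) (α β : Fin n →₀ ℕ) :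
    wt (fun i => (ω i : ℝ)) α = wt (fun i => (ω i : ℝ)) β ↔ wtNat ω α = wtNat ω β := by
  rw [wt_eq_cast, wt_eq_cast, Rat.cast_inj]
  rw [← Nat.cast_inj (R := ℚ), wtNat_cast ω hω, wtNat_cast ω hω]
  have hD : ((∏ j, (ω j).den : ℕ) : ℚ) ≠ 0 := by
    have : 0 < ∏ j, (ω j).den := Finset.prod_pos fun j _ => (ω j).pos
    positivity
  exact (mul_left_inj' hD).symm


noncomputable def refineOrder (ω : Fin n → ℚ) (hω : ∀ i, 0 ≤ ω i) (t : TermOrder n) :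
    TermOrder n where
  lt := refineLt (fun i => (ω i : ℝ)) t
  irrefl a := by
    rintro (h | ⟨-, h⟩)
    · exact lt_irrefl _ h
    · exact t.irrefl a h
  trans a b c hab hbc := by
    rcases hab with h1 | ⟨h1, h1'⟩ <;> rcases hbc with h2 | ⟨h2, h2'⟩
    · exact Or.inl (h1.trans h2)
    · exact Or.inl (h2 ▸ h1)
    · exact Or.inl (h1 ▸ h2)
    · exact Or.inr ⟨h1.trans h2, t.trans a b c h1' h2'⟩
  trichotomous a b := by
    rcases lt_trichotomy (wt (fun i => (ω i : ℝ)) a) (wt (fun i => (ω i : ℝ)) b) with h | h | h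
    · exact Or.inl (Or.inl h)
    · rcases t.trichotomous a b with h' | h' | h'
      · exact Or.inl (Or.inr ⟨h, h'⟩)
      · exact Or.inr (Or.inl h')
      · exact Or.inr (Or.inr (Or.inr ⟨h.symm, h'⟩))
    · exact Or.inr (Or.inr (Or.inl h))
  wf := by
    have hwf : WellFounded (InvImage (Prod.Lex Nat.lt t.lt)
        (fun α => (wtNat ω α, α))) :=
      InvImage.wf _ (WellFounded.prod_lex (Nat.lt_wfRel.wf) t.wf)
    refine Subrelation.wf ?_ hwf
    intro a b hab
    rcases hab with h | ⟨h, h'⟩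
    · exact Prod.Lex.left _ _ ((wt_lt_iff ω hω a b).1 h)
    · have := (wt_eq_iff ω hω a b).1 h
      rw [InvImage]
      simp only [this]
      exact Prod.Lex.right _ h'
  add_right a b c hab := by
    rcases hab with h | ⟨h, h'⟩
    · exact Or.inl (by rw [wt_add, wt_add]; linarith)
    · exact Or.inr ⟨by rw [wt_add, wt_add, h], t.add_right a b c h'⟩

theorem refineOrder_lt (ω : Fin n → ℚ) (hω : ∀ i, 0 ≤ ω i) (t : TermOrder n) :
    (refineOrder ω hω t).lt = refineLt (fun i => (ω i : ℝ)) t := rfl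

-- ### lemma C and D

theorem refineLt_wt_le {ωr : Fin n → ℝ} {t : TermOrder n} {α β : Fin n →₀ ℕ}
    (h : refineLt ωr t α β) : wt ωr α ≤ wt ωr β := by
  rcases h with h | ⟨h, -⟩
  · exact le_of_lt h
  · exact le_of_eq h

theorem refine_wt_max (ω : Fin n → ℚ) (hω : ∀ i, 0 ≤ ω i) (t : TermOrder n)
    {k : Type*} [CommSemiring k] {f : MvPolynomial (Fin n) k} (hf : f ≠ 0) :
    ∀ γ ∈ f.support, wt (fun i => (ω i : ℝ)) γ
      ≤ wt (fun i => (ω i : ℝ)) ((refineOrder ω hω t).leadExp f) := by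
  intro γ hγ
  set T := refineOrder ω hω t
  have hT := T.isLeadExp_leadExp hf
  rcases eq_or_ne γ (T.leadExp f) with rfl | hne
  · exact le_refl _
  · exact refineLt_wt_le (hT.2 γ hγ hne)

theorem leadTerm_initialForm (ω : Fin n → ℚ) (hω : ∀ i, 0 ≤ ω i) (t : TermOrder n)
    {k : Type*} [CommSemiring k] {f : MvPolynomial (Fin n) k} (hf : f ≠ 0) :
    t.leadTerm (initialForm (fun i => (ω i : ℝ)) f) = (refineOrder ω hω t).leadTerm f := by
  set T := refineOrder ω hω t with hTdef
  set μ := T.leadExp f with hμ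
  have hT := T.isLeadExp_leadExp hf
  have hmax : ∀ γ ∈ f.support, wt (fun i => (ω i : ℝ)) γ ≤ wt (fun i => (ω i : ℝ)) μ :=
    refine_wt_max ω hω t hf
  have hsupp : μ ∈ (initialForm (fun i => (ω i : ℝ)) f).support :=
    mem_support_initialForm.2 ⟨hT.1, hmax⟩
  have hlead : t.IsLeadExp (initialForm (fun i => (ω i : ℝ)) f) μ := by
    refine ⟨hsupp, fun β hβ hne => ?_⟩
    obtain ⟨hβf, hβmax⟩ := mem_support_initialForm.1 hβ
    have h2 := hT.2 β hβf hne
    rw [hTdef, refineOrder_lt] at h2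
    rcases h2 with h | ⟨-, h⟩
    · exact absurd (hβmax μ hT.1) (not_le.2 h)
    · exact h
  unfold TermOrder.leadTerm
  rw [t.leadExp_eq hlead, ← hμ, coeff_initialForm_of_mem hmax]

theorem refine_leadExp_eq_of_cone (ω : Fin n → ℚ) (hω : ∀ i, 0 ≤ ω i) (t : TermOrder n)
    {k : Type*} [CommSemiring k] {g : MvPolynomial (Fin n) k} (hg : g ≠ 0)
    (hc : ∀ β ∈ g.support, wt (fun i => (ω i : ℝ)) β ≤ wt (fun i => (ω i : ℝ)) (t.leadExp g)) :
    (refineOrder ω hω t).leadExp g = t.leadExp g := by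
  have ht := t.isLeadExp_leadExp hg
  refine (refineOrder ω hω t).leadExp_eq ⟨ht.1, fun β hβ hne => ?_⟩
  show refineLt (fun i => (ω i : ℝ)) t β (t.leadExp g)
  rcases lt_or_eq_of_le (hc β hβ) with h | h
  · exact Or.inl h
  · exact Or.inr ⟨h, ht.2 β hβ hne⟩

-- ### lemma M : monomial membership in monomial ideal

theorem exists_leadExp_le_of_monomial_mem {k : Type*} [CommSemiring k] (t : TermOrder n)
    (G : Finset (MvPolynomial (Fin n) k))
    (hmonic : ∀ g ∈ G, coeff (t.leadExp g) g = 1)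
    {α : Fin n →₀ ℕ} {c : k} (hc : c ≠ 0)
    (hmem : (monomial α c : MvPolynomial (Fin n) k) ∈
      Ideal.span ((fun g => t.leadTerm g) '' (G : Set (MvPolynomial (Fin n) k)))) :
    ∃ g ∈ G, t.leadExp g ≤ α := by
  classical
  by_contra hno
  push_neg at hno
  obtain ⟨l, hl, hsum⟩ := Submodule.mem_span_set.1 hmem
  have hcoeff : coeff α ((monomial α c : MvPolynomial (Fin n) k)) = c := by
    rw [coeff_monomial, if_pos rfl]
  rw [← hsum] at hcoeff
  rw [Finsupp.sum] at hcoeff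
  rw [coeff_sum] at hcoeff
  have : ∀ a ∈ l.support, coeff α (l a • a) = 0 := by
    intro a ha
    obtain ⟨g, hgG', hga⟩ := hl ha
    have hgG : g ∈ G := by exact_mod_cast hgG'
    have hlt : a = monomial (t.leadExp g) 1 := by
      rw [← hga]
      unfold TermOrder.leadTerm
      simp only [hmonic g hgG]
    rw [smul_eq_mul, hlt, coeff_mul_monomial', if_neg (hno g hgG)]
  rw [Finset.sum_eq_zero this] at hcoeff
  exact hc hcoeff.symm

-- ### lemma F : division

theorem exists_leadExp_le_refine {k : Type*} [Field k] (t : TermOrder n)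
    (ω : Fin n → ℚ) (hω : ∀ i, 0 ≤ ω i)
    (I : Ideal (MvPolynomial (Fin n) k)) (G : Finset (MvPolynomial (Fin n) k))
    (hGI : ∀ g ∈ G, g ∈ I)
    (hspan : Ideal.span ((fun g => t.leadTerm g) '' (G : Set (MvPolynomial (Fin n) k)))
      = initialIdealT t I)
    (hmonic : ∀ g ∈ G, coeff (t.leadExp g) g = 1)
    (hcone : ∀ g ∈ G, ∀ β ∈ g.support,
      wt (fun i => (ω i : ℝ)) β ≤ wt (fun i => (ω i : ℝ)) (t.leadExp g)) :
    ∀ f ∈ I, f ≠ 0 → ∃ g ∈ G, t.leadExp g ≤ (refineOrder ω hω t).leadExp f := by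
  classical
  set ωr : Fin n → ℝ := fun i => (ω i : ℝ) with hωr
  set T := refineOrder ω hω t with hTdef
  suffices H : ∀ α, ∀ f, f ∈ I → f ≠ 0 → t.leadExp f = α → ∃ g ∈ G, t.leadExp g ≤ T.leadExp f by
    intro f hfI hf0
    exact H (t.leadExp f) f hfI hf0 rfl
  intro α
  refine WellFounded.induction
    (C := fun α => ∀ f, f ∈ I → f ≠ 0 → t.leadExp f = α →
      ∃ g ∈ G, t.leadExp g ≤ T.leadExp f) t.wf α ?_
  clear α
  intro α IH f hfI hf0 hfα
  -- leading term of f is in the initial ideal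
  have hmem : t.leadTerm f ∈ initialIdealT t I := Ideal.subset_span ⟨f, hfI, hf0, rfl⟩
  rw [← hspan] at hmem
  obtain ⟨g, hgG, hgle⟩ := exists_leadExp_le_of_monomial_mem t G hmonic
    (t.coeff_leadExp_ne_zero hf0) hmem
  by_cases heq : t.leadExp f = T.leadExp f
  · exact ⟨g, hgG, heq ▸ hgle⟩
  -- otherwise reduce
  set lf := t.leadExp f with hlf
  set lg := t.leadExp g with hlg
  set μ := T.leadExp f with hμ
  have hg0 : g ≠ 0 := by
    intro h
    have := hmonic g hgG
    rw [h] at this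
    simp at this
  have htf := t.isLeadExp_leadExp hf0
  have htg := t.isLeadExp_leadExp hg0
  have hTf := T.isLeadExp_leadExp hf0
  set c := coeff lf f with hc
  set γ := lf - lg with hγdef
  have hγ : γ + lg = lf := tsub_add_cancel_of_le hgle
  set q := (monomial γ c : MvPolynomial (Fin n) k) * g with hq
  set f₁ := f - q with hf₁
  have hf₁I : f₁ ∈ I := I.sub_mem hfI (Ideal.mul_mem_left _ _ (hGI g hgG))
  -- support of q
  have hqsupp : ∀ β ∈ q.support, ∃ δ ∈ g.support, β = γ + δ := by
    intro β hβ
    have := support_mul (monomial γ c) g hβ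
    rw [Finset.mem_add] at this
    obtain ⟨y, hy, z, hz, hyz⟩ := this
    have hy' : y = γ := by
      have := support_monomial_subset hy
      simpa using this
    exact ⟨z, hz, by rw [← hyz, hy']⟩
  have hqwt : ∀ β ∈ q.support, wt ωr β ≤ wt ωr lf := by
    intro β hβ
    obtain ⟨δ, hδ, rfl⟩ := hqsupp β hβ
    rw [← hγ, wt_add, wt_add]
    have := hcone g hgG δ hδ
    linarith
  have hqlt : ∀ β ∈ q.support, β ≠ lf → t.lt β lf := by
    intro β hβ hne
    obtain ⟨δ, hδ, rfl⟩ := hqsupp β hβ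
    rcases eq_or_ne δ lg with rfl | hδne
    · exact absurd hγ hne
    · have := t.add_right δ lg γ (htg.2 δ hδ hδne)
      rw [← hγ]
      rw [add_comm γ δ, add_comm γ lg]
      exact this
  -- coefficient computations
  have hqc : coeff lf q = c := by
    rw [← hγ, hq, coeff_monomial_mul, hmonic g hgG, mul_one]
  have hf₁lf : coeff lf f₁ = 0 := by
    rw [hf₁, coeff_sub, hqc, sub_self]
  have hlf_not : lf ∉ f₁.support := by
    rw [mem_support_iff]
    exact fun h => h hf₁lf
  -- μ relations
  have hμne : lf ≠ μ := heq
  have hrlfμ : refineLt ωr t lf μ := by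
    have := hTf.2 lf htf.1 hμne
    rwa [hTdef, refineOrder_lt] at this
  have hqμ : coeff μ q = 0 := by
    by_contra hne0
    have hμq : μ ∈ q.support := mem_support_iff.2 hne0
    have h1 : wt ωr μ ≤ wt ωr lf := hqwt μ hμq
    rcases hrlfμ with h | ⟨he, hlt⟩
    · linarith
    · exact t.irrefl μ (t.trans μ lf μ (hqlt μ hμq (Ne.symm hμne)) hlt)
  have hf₁μ : coeff μ f₁ = coeff μ f := by
    rw [hf₁, coeff_sub, hqμ, sub_zero]
  have hμf : coeff μ f ≠ 0 := mem_support_iff.1 hTf.1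
  have hf₁0 : f₁ ≠ 0 := by
    intro h
    rw [h] at hf₁μ
    exact hμf (by simpa using hf₁μ.symm)
  have hμf₁ : μ ∈ f₁.support := mem_support_iff.2 (by rw [hf₁μ]; exact hμf)
  -- f₁ support is in supp f ∪ supp q
  have hf₁supp : f₁.support ⊆ f.support ∪ q.support := by
    rw [hf₁]; exact support_sub _ f q
  -- all of supp f₁ is t-below lf
  have hf₁lt : ∀ β ∈ f₁.support, t.lt β lf := by
    intro β hβ
    have hβne : β ≠ lf := fun h => hlf_not (h ▸ hβ)
    rcases Finset.mem_union.1 (hf₁supp hβ) with h | h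
    · exact htf.2 β h hβne
    · exact hqlt β h hβne
  -- T-lead of f₁ is μ
  have hTf₁ : T.IsLeadExp f₁ μ := by
    refine ⟨hμf₁, fun β hβ hne => ?_⟩
    show refineLt ωr t β μ
    rcases Finset.mem_union.1 (hf₁supp hβ) with h | h
    · have := hTf.2 β h hne
      rwa [hTdef, refineOrder_lt] at this
    · have hwle : wt ωr β ≤ wt ωr lf := hqwt β h
      rcases hrlfμ with hw | ⟨he, hlt⟩
      · exact Or.inl (lt_of_le_of_lt hwle hw)
      · rcases eq_or_ne β lf with rfl | hβlf
        · exact Or.inr ⟨he, hlt⟩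
        · rcases lt_or_eq_of_le (le_trans hwle (le_of_eq he)) with hw2 | hw2
          · exact Or.inl hw2
          · exact Or.inr ⟨hw2, t.trans β lf μ (hqlt β h hβlf) hlt⟩
  have hTf₁eq : T.leadExp f₁ = μ := T.leadExp_eq hTf₁
  -- apply induction hypothesis
  have hlt₁ : t.lt (t.leadExp f₁) α := by
    rw [← hfα]
    exact hf₁lt (t.leadExp f₁) (t.leadExp_mem_support hf₁0)
  obtain ⟨g', hg'G, hg'le⟩ := IH (t.leadExp f₁) hlt₁ f₁ hf₁I hf₁0 rfl
  rw [hTf₁eq] at hg'le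
  exact ⟨g', hg'G, hg'le⟩

-- ### more piece lemmas

theorem piece_zero {k : Type*} [CommSemiring k] (ω : Fin n → ℝ) (d : ℝ) :
    piece ω d (0 : MvPolynomial (Fin n) k) = 0 := by
  ext β
  rw [coeff_piece]
  simp

theorem piece_sum {k : Type*} [CommSemiring k] (ω : Fin n → ℝ) (d : ℝ)
    {ι : Type*} (s : Finset ι) (F : ι → MvPolynomial (Fin n) k) :
    piece ω d (∑ x ∈ s, F x) = ∑ x ∈ s, piece ω d (F x) := by
  classical
  induction s using Finset.induction_on with
  | empty => simp [piece_zero]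
  | @insert a s ha ih =>
    rw [Finset.sum_insert ha, Finset.sum_insert ha, piece_add, ih]

theorem initialForm_spec {k : Type*} [CommSemiring k] (ω : Fin n → ℝ)
    {p : MvPolynomial (Fin n) k} (hp : p ≠ 0) :
    ∃ e : ℝ, initialForm ω p = piece ω e p ∧ (∀ β ∈ p.support, wt ω β ≤ wt ω β)
      ∧ (∀ β ∈ p.support, wt ω β ≤ e) ∧ piece ω e p ≠ 0 := by
  have hne : p.support.Nonempty := Finset.nonempty_iff_ne_empty.2 (mt support_eq_empty.1 hp)
  obtain ⟨α₀, hα₀, hmax⟩ := Finset.exists_max_image p.support (fun α => wt ω α) hne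
  refine ⟨wt ω α₀, ?_, fun β hβ => le_refl _, hmax, ?_⟩
  · have hne2 : piece ω (wt ω α₀) p ≠ 0 := by
      intro h
      have : coeff α₀ (piece ω (wt ω α₀) p) = coeff α₀ p := by
        rw [coeff_piece, if_pos rfl]
      rw [h, coeff_zero] at this
      exact mem_support_iff.1 hα₀ this.symm
    exact initialForm_eq_piece hmax hne2
  · intro h
    have : coeff α₀ (piece ω (wt ω α₀) p) = coeff α₀ p := by
      rw [coeff_piece, if_pos rfl]
    rw [h, coeff_zero] at this
    exact mem_support_iff.1 hα₀ this.symm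

theorem initialForm_ne_zero {k : Type*} [CommSemiring k] (ω : Fin n → ℝ)
    {p : MvPolynomial (Fin n) k} (hp : p ≠ 0) : initialForm ω p ≠ 0 := by
  obtain ⟨e, heq, -, -, hne⟩ := initialForm_spec ω hp
  rw [heq]; exact hne

/-- key structure lemma: nonzero graded pieces of elements of `in_ω(I)` are
initial forms of elements of `I`. -/
theorem exists_initialForm_eq_piece {k : Type*} [CommSemiring k] (ω : Fin n → ℝ)
    (I : Ideal (MvPolynomial (Fin n) k)) {h : MvPolynomial (Fin n) k}
    (hh : h ∈ initialIdealW ω I) (d : ℝ) (hne : piece ω d h ≠ 0) :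
    ∃ f ∈ I, f ≠ 0 ∧ initialForm ω f = piece ω d h := by
  classical
  obtain ⟨l, hl, hsum⟩ := Submodule.mem_span_set.1 hh
  have hP : ∀ a : l.support, ∃ fa, fa ∈ I ∧ fa ≠ 0 ∧ (a : MvPolynomial (Fin n) k)
      = initialForm ω fa := fun a => hl a.2
  choose F hFI hF0 hFa using hP
  have hE : ∀ a : l.support, ∃ e : ℝ, initialForm ω (F a) = piece ω e (F a)
      ∧ (∀ β ∈ (F a).support, wt ω β ≤ e) ∧ piece ω e (F a) ≠ 0 := by
    intro a
    obtain ⟨e, h1, -, h2, h3⟩ := initialForm_spec ω (hF0 a)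
    exact ⟨e, h1, h2, h3⟩
  choose e he1 he2 he3 using hE
  -- homogeneity of the generators
  have hahomog : ∀ a : l.support, ∀ γ ∈ (a : MvPolynomial (Fin n) k).support,
      wt ω γ = e a := by
    intro a γ hγ
    rw [hFa a, he1 a] at hγ
    exact wt_of_mem_support_piece hγ
  -- the candidate element of I
  set f : MvPolynomial (Fin n) k :=
    ∑ a ∈ l.support.attach, piece ω (d - e a) (l a) * F a with hfdef
  have hfI : f ∈ I := Ideal.sum_mem I fun a _ => Ideal.mul_mem_left _ _ (hFI a)
  -- rewrite h as a sum over the attached support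
  have hhsum : h = ∑ a ∈ l.support.attach, l a * (a : MvPolynomial (Fin n) k) := by
    rw [← hsum, Finsupp.sum]
    rw [← Finset.sum_attach l.support (fun a => l a • a)]
    refine Finset.sum_congr rfl fun a _ => smul_eq_mul _ _
  -- piece d h
  have hpieceh : piece ω d h = ∑ a ∈ l.support.attach,
      piece ω (d - e a) (l a) * (a : MvPolynomial (Fin n) k) := by
    rw [hhsum, piece_sum]
    refine Finset.sum_congr rfl fun a _ => ?_
    exact piece_mul_homog ω d (e a) (l a) (a : MvPolynomial (Fin n) k) (hahomog a)
  -- piece d f = piece d h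
  have hpiecef : piece ω d f = piece ω d h := by
    rw [hfdef, piece_sum, hpieceh]
    refine Finset.sum_congr rfl fun a _ => ?_
    rw [mul_comm (piece ω (d - e a) (l a)) (F a)]
    rw [piece_mul_homog ω d (d - e a) (F a) (piece ω (d - e a) (l a))
      (fun γ hγ => wt_of_mem_support_piece hγ)]
    have hde : d - (d - e a) = e a := by ring
    rw [hde, ← he1 a, ← hFa a]
    exact mul_comm _ _
  -- all weights of f are ≤ d
  have hfwt : ∀ β ∈ f.support, wt ω β ≤ d := by
    intro β hβ
    have := support_sum hβ
    rw [Finset.mem_biUnion] at this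
    obtain ⟨a, -, hβa⟩ := this
    have := support_mul _ _ hβa
    rw [Finset.mem_add] at this
    obtain ⟨y, hy, z, hz, hyz⟩ := this
    have h1 : wt ω y = d - e a := wt_of_mem_support_piece hy
    have h2 : wt ω z ≤ e a := he2 a z hz
    rw [← hyz, wt_add]
    linarith
  have hf0 : f ≠ 0 := by
    intro h0
    rw [h0, piece_zero] at hpiecef
    exact hne hpiecef.symm
  refine ⟨f, hfI, hf0, ?_⟩
  rw [initialForm_eq_piece hfwt (by rw [hpiecef]; exact hne)]
  exact hpiecef

-- ### leading term of the top graded piece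

theorem leadTerm_piece_top {k : Type*} [CommSemiring k] (ω : Fin n → ℝ) (t : TermOrder n)
    {h : MvPolynomial (Fin n) k} (hh : h ≠ 0) :
    piece ω (wt ω (t.leadExp h)) h ≠ 0 ∧
      t.leadTerm (piece ω (wt ω (t.leadExp h)) h) = t.leadTerm h := by
  set d := wt ω (t.leadExp h) with hd
  have hlead := t.isLeadExp_leadExp hh
  have hcoeff : coeff (t.leadExp h) (piece ω d h) = coeff (t.leadExp h) h := by
    rw [coeff_piece, if_pos rfl]
  have hne : piece ω d h ≠ 0 := by
    intro h0
    rw [h0, coeff_zero] at hcoeff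
    exact t.coeff_leadExp_ne_zero hh hcoeff.symm
  have hlead2 : t.IsLeadExp (piece ω d h) (t.leadExp h) := by
    refine ⟨mem_support_iff.2 (by rw [hcoeff]; exact t.coeff_leadExp_ne_zero hh), ?_⟩
    intro β hβ hne'
    exact hlead.2 β (support_piece_subset ω d h hβ) hne'
  refine ⟨hne, ?_⟩
  unfold TermOrder.leadTerm
  rw [t.leadExp_eq hlead2, hcoeff]

theorem leadTerm_congr_of_leadExp_eq {k : Type*} [CommSemiring k] (t t' : TermOrder n)
    {p : MvPolynomial (Fin n) k} (h : t.leadExp p = t'.leadExp p) :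
    t.leadTerm p = t'.leadTerm p := by
  unfold TermOrder.leadTerm
  rw [h]


/-- If `G` is a marked Gröbner basis of `I` w.r.t. `t` and the rational
weight vector `ω` lies in the closed Gröbner cone of `t` (weak inequalities on each
`g ∈ G`), then `in_ω(G)` is a Gröbner basis of `in_ω(I)` w.r.t. `t`, with
`in_t(in_ω(g)) = in_t(g)` for each `g ∈ G`. -/
theorem initialForms_give_GB {k : Type*} [Field k] (t : TermOrder n)
    (I : Ideal (MvPolynomial (Fin n) k)) (G : Finset (MvPolynomial (Fin n) k))
    (hG : IsReducedGB t I G)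
    (ω : Fin n → ℚ) (hω : ∀ i, 0 ≤ ω i)
    (ωr : Fin n → ℝ) (hωr : ωr = fun i => (ω i : ℝ))
    (hcone : ∀ g ∈ G, ∀ β ∈ g.support, wt ωr β ≤ wt ωr (t.leadExp g)) :
    (∀ g ∈ G, initialForm ωr g ∈ initialIdealW ωr I) ∧
    Ideal.span ((fun g => t.leadTerm (initialForm ωr g)) ''
        (G : Set (MvPolynomial (Fin n) k)))
      = initialIdealT t (initialIdealW ωr I) ∧
    ∀ g ∈ G, t.leadTerm (initialForm ωr g) = t.leadTerm g := by
  subst hωr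
  set ωr : Fin n → ℝ := fun i => (ω i : ℝ) with hωr
  obtain ⟨⟨hGI, hspan⟩, hmonic, hred, hmin⟩ := hG
  set T := refineOrder ω hω t with hTdef
  have hg0 : ∀ g ∈ G, g ≠ 0 := by
    intro g hg h0
    have := hmonic g hg
    rw [h0] at this
    simp at this
  -- part 1
  have part1 : ∀ g ∈ G, initialForm ωr g ∈ initialIdealW ωr I := by
    intro g hg
    exact Ideal.subset_span ⟨g, hGI g hg, hg0 g hg, rfl⟩
  -- part 3
  have part3 : ∀ g ∈ G, t.leadTerm (initialForm ωr g) = t.leadTerm g := by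
    intro g hg
    rw [leadTerm_initialForm ω hω t (hg0 g hg)]
    exact leadTerm_congr_of_leadExp_eq T t
      (refine_leadExp_eq_of_cone ω hω t (hg0 g hg) (hcone g hg))
  refine ⟨part1, ?_, part3⟩
  -- part 2
  apply le_antisymm
  · -- span of lead terms of initial forms ⊆ initial ideal of in_ω(I)
    rw [Ideal.span_le]
    rintro p ⟨g, hgG', rfl⟩
    have hgG : g ∈ G := by exact_mod_cast hgG'
    exact Ideal.subset_span
      ⟨initialForm ωr g, part1 g hgG, initialForm_ne_zero ωr (hg0 g hgG), rfl⟩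
  · rw [initialIdealT, Ideal.span_le]
    rintro p ⟨h, hhW, hh0, rfl⟩
    set d := wt ωr (t.leadExp h) with hd
    obtain ⟨hpne, hpeq⟩ := leadTerm_piece_top ωr t hh0
    obtain ⟨f, hfI, hf0, hfeq⟩ := exists_initialForm_eq_piece ωr I hhW d hpne
    have hlt1 : t.leadTerm h = T.leadTerm f := by
      rw [← hpeq, ← hfeq]
      exact leadTerm_initialForm ω hω t hf0
    obtain ⟨g, hgG, hgle⟩ := exists_leadExp_le_refine t ω hω I G hGI hspan hmonic hcone
      f hfI hf0
    -- t.leadTerm h = monomial (T.leadExp f) c = monomial (ν - lg) c * t.leadTerm g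
    set ν := T.leadExp f with hν
    set lg := t.leadExp g with hlg
    have hsplit : (T.leadTerm f : MvPolynomial (Fin n) k)
        = monomial (ν - lg) (coeff ν f) * t.leadTerm g := by
      unfold TermOrder.leadTerm
      rw [← hν, ← hlg, hmonic g hgG, monomial_mul, mul_one,
        tsub_add_cancel_of_le hgle]
    have hmem : t.leadTerm g ∈ Ideal.span ((fun g => t.leadTerm (initialForm ωr g)) ''
        (G : Set (MvPolynomial (Fin n) k))) := by
      rw [← part3 g hgG]
      exact Ideal.subset_span ⟨g, hgG, rfl⟩
    rw [hlt1, hsplit]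
    exact Ideal.mul_mem_left _ _ hmem
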